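/- Suppose f: ℝ → ℝ is nonnegative, differentiable, and H-smooth (i.e., its derivative is H-Lipschitz). Then f is √H-sqrt-Lipschitz, i.e., |f'(x)| ≤ 2√H · √(f(x)) for all x. -/

import Mathlib

/-- A nonnegative, differentiable, `H`-smooth function (derivative `H`-Lipschitz)
is `√H`-sqrt-Lipschitz: `|f'(x)| ≤ 2√H·√(f(x))` for all `x`. -/
theorem smooth_nonneg_is_sqrt_lipschitz (f : ℝ → ℝ) (H : ℝ)
    (hnonneg : ∀ x, 0 ≤ f x) (hdiff : Differentiable ℝ f)
    (hsmooth : ∀ x y : ℝ, |deriv f x - deriv f y| ≤ H * |x - y|) :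
    ∀ x : ℝ, |deriv f x| ≤ 2 * Real.sqrt H * Real.sqrt (f x) := by
  intro x
  have hH : 0 ≤ H := by
    have h := hsmooth (x + 1) x
    have h0 : (0:ℝ) ≤ |deriv f (x+1) - deriv f x| := abs_nonneg _
    have : |x + 1 - x| = 1 := by norm_num
    rw [this, mul_one] at h
    linarith
  -- key descent inequality
  have key : ∀ d : ℝ, 0 ≤ f x + deriv f x * d + H * d ^ 2 := by
    intro d
    set g : ℝ → ℝ := fun z => f z - deriv f x * z with hg
    have hgd : Differentiable ℝ g := hdiff.sub (differentiable_id.const_mul _)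
    have hgderiv : ∀ z, deriv g z = deriv f z - deriv f x := by
      intro z
      have : HasDerivAt g (deriv f z - deriv f x * 1) z := by
        exact ((hdiff z).hasDerivAt).sub (((hasDerivAt_id z).const_mul (deriv f x)))
      simpa using this.deriv
    have hbound : ∀ z ∈ Set.uIcc x (x + d), ‖deriv g z‖ ≤ H * |d| := by
      intro z hz
      rw [hgderiv, Real.norm_eq_abs]
      calc |deriv f z - deriv f x| ≤ H * |z - x| := hsmooth z x
        _ ≤ H * |d| := by
          apply mul_le_mul_of_nonneg_left _ hH
          have := Set.abs_sub_left_of_mem_uIcc hz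
          simpa using this
    have hmvt := Convex.norm_image_sub_le_of_norm_deriv_le
      (f := g) (s := Set.uIcc x (x + d)) (C := H * |d|)
      (fun z _ => hgd z) hbound (convex_uIcc _ _)
      Set.left_mem_uIcc Set.right_mem_uIcc
    have h1 : |f (x + d) - f x - deriv f x * d| ≤ H * d ^ 2 := by
      have : g (x + d) - g x = f (x + d) - f x - deriv f x * d := by
        simp [hg]; ring
      rw [Real.norm_eq_abs, this] at hmvt
      calc |f (x + d) - f x - deriv f x * d| ≤ H * |d| * ‖x + d - x‖ := hmvt
        _ = H * d ^ 2 := by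
          rw [Real.norm_eq_abs]
          have : |x + d - x| = |d| := by ring_nf
          rw [this, mul_assoc, abs_mul_abs_self]
          ring
    have h4 : f (x + d) - f x - deriv f x * d ≤ H * d ^ 2 := le_of_abs_le h1
    have h5 := hnonneg (x + d)
    linarith
  rcases eq_or_lt_of_le hH with hH0 | hHpos
  · -- H = 0: derivative must be zero
    have hd0 : deriv f x = 0 := by
      by_contra hne
      have h1 := key (-(f x + 1) / deriv f x)
      rw [← hH0] at h1
      field_simp at h1
      rw [le_div_iff₀ (lt_of_le_of_ne (sq_nonneg _) (Ne.symm (pow_ne_zero 2 hne)))] at h1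
      rcases lt_or_gt_of_ne hne with h | h
      · nlinarith [hnonneg x]
      · nlinarith [hnonneg x]
    rw [hd0, abs_zero]
    positivity
  · have hsq : (deriv f x) ^ 2 ≤ 4 * H * f x := by
      have h1 := key (-(deriv f x) / (2 * H))
      have e : f x + deriv f x * (-(deriv f x) / (2 * H)) + H * (-(deriv f x) / (2 * H)) ^ 2
          = f x - (deriv f x) ^ 2 / (4 * H) := by
        field_simp
        ring
      rw [e] at h1
      have h2 : (deriv f x) ^ 2 / (4 * H) ≤ f x := by linarith
      have h3 := (div_le_iff₀ (by positivity : (0:ℝ) < 4 * H)).mp h2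
      nlinarith [h3]
    calc |deriv f x| = Real.sqrt ((deriv f x) ^ 2) := (Real.sqrt_sq_eq_abs _).symm
      _ ≤ Real.sqrt (4 * H * f x) := Real.sqrt_le_sqrt hsq
      _ = 2 * Real.sqrt H * Real.sqrt (f x) := by
        rw [show (4 : ℝ) * H * f x = (2 * Real.sqrt H * Real.sqrt (f x)) ^ 2 by
          rw [mul_pow, mul_pow, Real.sq_sqrt hH, Real.sq_sqrt (hnonneg x)]; ring]
        exact Real.sqrt_sq (by positivity)
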